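/- For N ≥ 3 odd and k ∈ [1,N−1], and any two-element subset {i,j} of [1,N−2] with (i<j, j−i odd) or (i>j, i≡j mod 2): there exists c ∈ {0,1} such that ⌊ι_k(i), ι_k(j)⌋ = ι_k(⌊i,j⌋) + c·{k,k+1} in E_N, i.e., the symmetric difference of ⌊ι_k(i),ι_k(j)⌋ and the image ι_k(⌊i,j⌋) is either empty or equal to {k,k+1}. -/
import Mathlib


def iota (k i : ℕ) : ℕ := if i < k then i else i + 2

/-- `⌊i,j⌋_M ⊆ [1,M]`. -/
def arcSet (M i j : ℕ) : Finset ℕ :=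
  if i < j then Finset.Icc i j else Finset.Icc i M ∪ Finset.Icc 1 j

lemma mem_arc (M a b x : ℕ) : x ∈ arcSet M a b ↔
    (a < b ∧ a ≤ x ∧ x ≤ b) ∨ (b ≤ a ∧ ((a ≤ x ∧ x ≤ M) ∨ (1 ≤ x ∧ x ≤ b))) := by
  unfold arcSet
  split_ifs with h <;> simp [Finset.mem_Icc, Finset.mem_union, h] <;> omega

lemma mem_image_iota (S : Finset ℕ) (k x : ℕ) :
    x ∈ S.image (iota k) ↔ (x < k ∧ x ∈ S) ∨ (k + 2 ≤ x ∧ x - 2 ∈ S) := by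
  simp only [Finset.mem_image]
  constructor
  · rintro ⟨y, hy, rfl⟩
    unfold iota
    split_ifs with h
    · exact Or.inl ⟨h, hy⟩
    · refine Or.inr ⟨by omega, by simpa using hy⟩
  · rintro (⟨h1, h2⟩ | ⟨h1, h2⟩)
    · exact ⟨x, h2, by simp [iota, h1]⟩
    · exact ⟨x - 2, h2, by unfold iota; split_ifs <;> omega⟩

/-- for odd `N ≥ 3`, `k ∈ [1,N−1]`, and a two-element subset
`{i,j}` of `[1,N−2]` with (`i<j`, `j−i` odd) or (`i>j`, `i ≡ j mod 2`):
`⌊ι_k(i), ι_k(j)⌋ = ι_k(⌊i,j⌋) + c·{k,k+1}` for some `c ∈ {0,1}`, i.e. the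
symmetric difference of `⌊ι_k(i), ι_k(j)⌋` (in `[1,N]`) and the image
`ι_k(⌊i,j⌋)` (of `⌊i,j⌋` taken in `[1,N−2]`) is `∅` or `{k,k+1}`. -/
theorem stmt16 (N k i j : ℕ) (hN : Odd N) (hN3 : 3 ≤ N)
    (hk1 : 1 ≤ k) (hk2 : k ≤ N - 1)
    (hi : 1 ≤ i) (hi2 : i ≤ N - 2) (hj : 1 ≤ j) (hj2 : j ≤ N - 2)
    (hij : (i < j ∧ (j - i) % 2 = 1) ∨ (j < i ∧ i % 2 = j % 2)) :
    symmDiff (arcSet N (iota k i) (iota k j)) ((arcSet (N - 2) i j).image (iota k)) = ∅ ∨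
    symmDiff (arcSet N (iota k i) (iota k j)) ((arcSet (N - 2) i j).image (iota k))
      = ({k, k + 1} : Finset ℕ) := by
  rw [Nat.odd_iff] at hN
  by_cases hc : k ∈ arcSet N (iota k i) (iota k j)
  · right
    ext x
    simp only [Finset.mem_symmDiff, mem_image_iota, mem_arc, Finset.mem_insert,
      Finset.mem_singleton, iota] at hc ⊢
    split_ifs at hc ⊢ <;> omega
  · left
    ext x
    simp only [Finset.mem_symmDiff, mem_image_iota, mem_arc, Finset.notMem_empty,
      iff_false, not_or, not_and, iota] at hc ⊢
    split_ifs at hc ⊢ <;> omega
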